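/- Let h > 0 and c be real numbers and let Ψ : ℝ × ℝ → ℝ be analytic in a neighborhood of (0,0) with Ψ(r,R) = (h/2)(r³ − c·R³) + φ(r,R), where φ is analytic near (0,0) and all partial derivatives of φ at (0,0) of total order ≤ 4 vanish (i.e. the power series of φ contains only terms of total degree ≥ 5). Then there exist δ > 0 and a unique continuous function R_h : [0,δ) → ℝ with R_h(0) = 0 satisfying R_h(r) = 2Ψ(r, R_h(r)) for all r ∈ [0,δ), and moreover lim_{r→0⁺} R_h(r)/r³ = h. -/

import Mathlib

open Set

private lemma clamp_abs_le (ε R : ℝ) (hε : 0 ≤ ε) : |max (-ε) (min ε R)| ≤ ε := by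
  rw [abs_le]
  exact ⟨le_max_left _ _, max_le (by linarith) (min_le_left _ _)⟩

private lemma clamp_lip (ε R₁ R₂ : ℝ) :
    |max (-ε) (min ε R₁) - max (-ε) (min ε R₂)| ≤ |R₁ - R₂| := by
  have hmax : ∀ x y : ℝ, |max (-ε) x - max (-ε) y| ≤ |x - y| := by
    intro x y
    rw [max_comm (-ε) x, max_comm (-ε) y]
    exact abs_max_sub_max_le_abs x y (-ε)
  have hmin : |min ε R₁ - min ε R₂| ≤ |R₁ - R₂| := by
    have h1 : ∀ x : ℝ, min ε x = -max (-ε) (-x) := by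
      intro x; rw [max_neg_neg, neg_neg]
    rw [h1 R₁, h1 R₂]
    have h2 := hmax (-R₁) (-R₂)
    calc |(-max (-ε) (-R₁)) - (-max (-ε) (-R₂))|
        = |max (-ε) (-R₁) - max (-ε) (-R₂)| := by rw [← abs_neg]; ring_nf
      _ ≤ |(-R₁) - (-R₂)| := h2
      _ = |R₁ - R₂| := by rw [← abs_neg]; ring_nf
  exact (hmax _ _).trans hmin

private lemma clamp_eq (ε R : ℝ) (hR : |R| ≤ ε) : max (-ε) (min ε R) = R := by
  rw [abs_le] at hR
  rw [min_eq_right hR.2, max_eq_right hR.1]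

private lemma cube_diff_bound (ε a b : ℝ) (ha : |a| ≤ ε) (hb : |b| ≤ ε) :
    |a ^ 3 - b ^ 3| ≤ 3 * ε ^ 2 * |a - b| := by
  have h1 : a ^ 3 - b ^ 3 = (a ^ 2 + a * b + b ^ 2) * (a - b) := by ring
  rw [h1, abs_mul]
  have h2 : |a ^ 2 + a * b + b ^ 2| ≤ 3 * ε ^ 2 := by
    have t1 : |a ^ 2 + a * b + b ^ 2| ≤ |a| ^ 2 + |a| * |b| + |b| ^ 2 := by
      calc |a ^ 2 + a * b + b ^ 2| ≤ |a ^ 2 + a * b| + |b ^ 2| := abs_add_le _ _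
        _ ≤ |a ^ 2| + |a * b| + |b ^ 2| := by linarith [abs_add_le (a ^ 2) (a * b)]
        _ = |a| ^ 2 + |a| * |b| + |b| ^ 2 := by rw [abs_mul, ← abs_pow, ← abs_pow]
    nlinarith [abs_nonneg a, abs_nonneg b]
  exact mul_le_mul_of_nonneg_right h2 (abs_nonneg _)

private lemma map_est (h c C ε δ r R W : ℝ)
    (hh : 0 < h) (C0 : 0 ≤ C) (hε0 : 0 < ε) (hε1 : ε ≤ 1)
    (hAε : (3 * h * |c| + 2 * C + 1) * ε ^ 2 ≤ 1 / 8)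
    (hδcube : h * δ ^ 3 ≤ ε / 8)
    (hr0 : 0 ≤ r) (hrδ : r ≤ δ) (hR : |R| ≤ ε) (hW : |W| ≤ C * ε ^ 5) :
    |h * (r ^ 3 - c * R ^ 3) + 2 * W| ≤ ε / 2 := by
  have hB0 : (0:ℝ) ≤ |c| := abs_nonneg c
  have h1 : |h * (r ^ 3 - c * R ^ 3) + 2 * W|
      ≤ h * r ^ 3 + h * |c| * |R| ^ 3 + 2 * (C * ε ^ 5) := by
    calc |h * (r ^ 3 - c * R ^ 3) + 2 * W|
        ≤ |h * (r ^ 3 - c * R ^ 3)| + |2 * W| := abs_add_le _ _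
      _ ≤ h * r ^ 3 + h * |c| * |R| ^ 3 + 2 * (C * ε ^ 5) := by
          have e1 : |h * (r ^ 3 - c * R ^ 3)| ≤ h * r ^ 3 + h * |c| * |R| ^ 3 := by
            rw [abs_mul, abs_of_pos hh]
            have e2 : |r ^ 3 - c * R ^ 3| ≤ r ^ 3 + |c| * |R| ^ 3 := by
              refine (abs_sub _ _).trans ?_
              rw [abs_pow, abs_of_nonneg hr0, abs_mul, abs_pow]
            nlinarith
          have e3 : |2 * W| = 2 * |W| := by rw [abs_mul]; norm_num
          rw [e3]
          linarith
  refine h1.trans ?_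
  have e4 : h * r ^ 3 ≤ ε / 8 := by
    have : r ^ 3 ≤ δ ^ 3 := pow_le_pow_left₀ hr0 hrδ 3
    nlinarith
  have e5 : h * |c| * |R| ^ 3 + 2 * (C * ε ^ 5) ≤ ε / 8 := by
    have f1 : |R| ^ 3 ≤ ε ^ 3 := pow_le_pow_left₀ (abs_nonneg _) hR 3
    have f2 : ε ^ 5 ≤ ε ^ 3 := pow_le_pow_of_le_one hε0.le hε1 (by norm_num)
    have f3 : h * |c| * ε ^ 3 + 2 * C * ε ^ 3 ≤ (3 * h * |c| + 2 * C + 1) * ε ^ 2 * ε := by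
      nlinarith [pow_pos hε0 3,
        mul_nonneg (mul_nonneg hh.le (abs_nonneg c)) (pow_nonneg hε0.le 3)]
    have f4 : (3 * h * |c| + 2 * C + 1) * ε ^ 2 * ε ≤ (1 / 8) * ε :=
      mul_le_mul_of_nonneg_right hAε hε0.le
    nlinarith [mul_le_mul_of_nonneg_left f1 (by positivity : (0:ℝ) ≤ h * |c|),
      mul_le_mul_of_nonneg_left f2 (by positivity : (0:ℝ) ≤ 2 * C)]
  linarith

private lemma lip_est (h c C ε d R₁ R₂ W₁ W₂ : ℝ)
    (hh : 0 < h) (C0 : 0 ≤ C) (hε0 : 0 < ε)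
    (hAε : (3 * h * |c| + 2 * C + 1) * ε ^ 2 ≤ 1 / 8)
    (hR₁ : |R₁| ≤ ε) (hR₂ : |R₂| ≤ ε)
    (hRd : |R₁ - R₂| ≤ d) (hWd : |W₁ - W₂| ≤ 1 / 8 * d) (hd : 0 ≤ d) :
    |(-(h * c)) * (R₁ ^ 3 - R₂ ^ 3) + 2 * (W₁ - W₂)| ≤ 1 / 2 * d := by
  have hB0 : (0:ℝ) ≤ |c| := abs_nonneg c
  have hcube : |R₁ ^ 3 - R₂ ^ 3| ≤ 3 * ε ^ 2 * d := by
    refine (cube_diff_bound ε R₁ R₂ hR₁ hR₂).trans ?_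
    exact mul_le_mul_of_nonneg_left hRd (by positivity)
  have g1 : |(-(h * c)) * (R₁ ^ 3 - R₂ ^ 3)| = h * |c| * |R₁ ^ 3 - R₂ ^ 3| := by
    rw [abs_mul, abs_neg, abs_mul, abs_of_pos hh]
  have g2 : |2 * (W₁ - W₂)| = 2 * |W₁ - W₂| := by rw [abs_mul]; norm_num
  have g3 := mul_le_mul_of_nonneg_left hcube (by positivity : (0:ℝ) ≤ h * |c|)
  have g5 : 3 * (h * |c|) * ε ^ 2 ≤ 1 / 8 := by nlinarith [pow_pos hε0 2]
  calc |(-(h * c)) * (R₁ ^ 3 - R₂ ^ 3) + 2 * (W₁ - W₂)|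
      ≤ |(-(h * c)) * (R₁ ^ 3 - R₂ ^ 3)| + |2 * (W₁ - W₂)| := abs_add_le _ _
    _ ≤ h * |c| * (3 * ε ^ 2 * d) + 2 * (1 / 8 * d) := by
        rw [g1, g2]; linarith
    _ ≤ 1 / 2 * d := by nlinarith

set_option maxHeartbeats 800000 in
private lemma key_est (h c C ε r X W : ℝ)
    (hh : 0 < h) (C0 : 0 ≤ C) (hε0 : 0 < ε) (hε1 : ε ≤ 1)
    (hAε : (3 * h * |c| + 2 * C + 1) * ε ^ 2 ≤ 1 / 8)
    (hr0 : 0 < r) (hr1 : r ≤ 1)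
    (hX : |X| ≤ ε) (hW : |W| ≤ C * (r ^ 5 + |X| ^ 5))
    (hXeq : X = h * (r ^ 3 - c * X ^ 3) + 2 * W) :
    |X / r ^ 3 - h|
      ≤ (h * |c| * (2 * (h + 2 * C)) ^ 3 + 2 * C + 2 * C * (2 * (h + 2 * C)) ^ 5) * r ^ 2 := by
  have hB0 : (0:ℝ) ≤ |c| := abs_nonneg c
  set K : ℝ := 2 * (h + 2 * C) with hKdef
  have hK0 : 0 < K := by positivity
  have e1 : |X| ≤ h * r ^ 3 + h * |c| * |X| ^ 3 + 2 * (C * (r ^ 5 + |X| ^ 5)) := by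
    calc |X| = |h * (r ^ 3 - c * X ^ 3) + 2 * W| := by rw [← hXeq]
      _ ≤ |h * (r ^ 3 - c * X ^ 3)| + |2 * W| := abs_add_le _ _
      _ ≤ h * r ^ 3 + h * |c| * |X| ^ 3 + 2 * (C * (r ^ 5 + |X| ^ 5)) := by
          have e2 : |h * (r ^ 3 - c * X ^ 3)| ≤ h * r ^ 3 + h * |c| * |X| ^ 3 := by
            rw [abs_mul, abs_of_pos hh]
            have e3 : |r ^ 3 - c * X ^ 3| ≤ r ^ 3 + |c| * |X| ^ 3 := by
              refine (abs_sub _ _).trans ?_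
              rw [abs_pow, abs_of_nonneg hr0.le, abs_mul, abs_pow]
            nlinarith
          have e4 : |2 * W| = 2 * |W| := by rw [abs_mul]; norm_num
          rw [e4]; linarith
  have p1 : |X| ^ 3 ≤ ε ^ 2 * |X| := by
    have q := pow_le_pow_left₀ (abs_nonneg X) hX 2
    calc |X| ^ 3 = |X| ^ 2 * |X| := by ring
      _ ≤ ε ^ 2 * |X| := mul_le_mul_of_nonneg_right q (abs_nonneg X)
  have p2 : |X| ^ 5 ≤ ε ^ 4 * |X| := by
    have q := pow_le_pow_left₀ (abs_nonneg X) hX 4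
    calc |X| ^ 5 = |X| ^ 4 * |X| := by ring
      _ ≤ ε ^ 4 * |X| := mul_le_mul_of_nonneg_right q (abs_nonneg X)
  have p3 : h * |c| * ε ^ 2 + 2 * C * ε ^ 4 ≤ 1 / 2 := by
    have q1 : h * |c| * ε ^ 2 ≤ (3 * h * |c| + 2 * C + 1) * ε ^ 2 := by
      nlinarith [mul_nonneg (mul_nonneg hh.le (abs_nonneg c)) (sq_nonneg ε),
        mul_nonneg C0 (sq_nonneg ε), sq_nonneg ε]
    have q2 : ε ^ 4 ≤ ε ^ 2 := pow_le_pow_of_le_one hε0.le hε1 (by norm_num)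
    have q3 : 2 * C * ε ^ 4 ≤ (3 * h * |c| + 2 * C + 1) * ε ^ 2 := by
      nlinarith [mul_le_mul_of_nonneg_left q2 (by positivity : (0:ℝ) ≤ 2 * C),
        mul_nonneg (mul_nonneg hh.le (abs_nonneg c)) (sq_nonneg ε), sq_nonneg ε]
    linarith
  have p4 : h * |c| * |X| ^ 3 + 2 * C * |X| ^ 5 ≤ 1 / 2 * |X| := by
    have q4 := mul_le_mul_of_nonneg_left p1 (by positivity : (0:ℝ) ≤ h * |c|)
    have q5 := mul_le_mul_of_nonneg_left p2 (by positivity : (0:ℝ) ≤ 2 * C)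
    have q6 := mul_le_mul_of_nonneg_right p3 (abs_nonneg X)
    nlinarith
  have p5 : r ^ 5 ≤ r ^ 3 := pow_le_pow_of_le_one hr0.le hr1 (by norm_num)
  have hstep : |X| ≤ K * r ^ 3 := by
    have q0 : |X| ≤ h * r ^ 3 + 2 * C * r ^ 5 + 1 / 2 * |X| := by nlinarith
    have q7 : 2 * C * r ^ 5 ≤ 2 * C * r ^ 3 :=
      mul_le_mul_of_nonneg_left p5 (by positivity)
    rw [hKdef]
    nlinarith
  have e5 : X - h * r ^ 3 = -(h * c) * X ^ 3 + 2 * W := by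
    conv_lhs => rw [hXeq]
    ring
  have e6 : |X - h * r ^ 3| ≤ h * |c| * |X| ^ 3 + 2 * (C * (r ^ 5 + |X| ^ 5)) := by
    rw [e5]
    refine (abs_add_le _ _).trans ?_
    have f1 : |(-(h * c)) * X ^ 3| = h * |c| * |X| ^ 3 := by
      rw [abs_mul, abs_neg, abs_mul, abs_of_pos hh, abs_pow]
    have f2 : |2 * W| = 2 * |W| := by rw [abs_mul]; norm_num
    rw [f1, f2]; linarith
  have g1 : |X| ^ 3 ≤ K ^ 3 * r ^ 5 := by
    have q8 := pow_le_pow_left₀ (abs_nonneg X) hstep 3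
    have hr9 : r ^ 9 ≤ r ^ 5 := pow_le_pow_of_le_one hr0.le hr1 (by norm_num)
    calc |X| ^ 3 ≤ (K * r ^ 3) ^ 3 := q8
      _ = K ^ 3 * r ^ 9 := by ring
      _ ≤ K ^ 3 * r ^ 5 := mul_le_mul_of_nonneg_left hr9 (by positivity)
  have g2 : |X| ^ 5 ≤ K ^ 5 * r ^ 5 := by
    have q9 := pow_le_pow_left₀ (abs_nonneg X) hstep 5
    have hr15 : r ^ 15 ≤ r ^ 5 := pow_le_pow_of_le_one hr0.le hr1 (by norm_num)
    calc |X| ^ 5 ≤ (K * r ^ 3) ^ 5 := q9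
      _ = K ^ 5 * r ^ 15 := by ring
      _ ≤ K ^ 5 * r ^ 5 := mul_le_mul_of_nonneg_left hr15 (by positivity)
  have e7 : |X - h * r ^ 3| ≤ (h * |c| * K ^ 3 + 2 * C + 2 * C * K ^ 5) * r ^ 5 := by
    have q8 := mul_le_mul_of_nonneg_left g1 (by positivity : (0:ℝ) ≤ h * |c|)
    have q9 := mul_le_mul_of_nonneg_left g2 (by positivity : (0:ℝ) ≤ 2 * C)
    nlinarith
  have hr3 : (0 : ℝ) < r ^ 3 := pow_pos hr0 3
  have e8 : |X / r ^ 3 - h| = |X - h * r ^ 3| / r ^ 3 := by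
    rw [show X / r ^ 3 - h = (X - h * r ^ 3) / r ^ 3 by field_simp, abs_div, abs_of_pos hr3]
  rw [e8, div_le_iff₀ hr3]
  calc |X - h * r ^ 3| ≤ (h * |c| * K ^ 3 + 2 * C + 2 * C * K ^ 5) * r ^ 5 := e7
    _ = (h * |c| * K ^ 3 + 2 * C + 2 * C * K ^ 5) * r ^ 2 * r ^ 3 := by ring

set_option maxHeartbeats 1000000 in
private lemma stmt3_core (h c : ℝ) (hh : 0 < h)
    (Ψ φ : ℝ × ℝ → ℝ)
    (hΨ : ∀ r R : ℝ, Ψ (r, R) = h / 2 * (r ^ 3 - c * R ^ 3) + φ (r, R))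
    (hφ0 : φ (0, 0) = 0)
    (C : ℝ) (C0 : 0 ≤ C) (m : ℝ) (m0 : 0 < m)
    (hφC : ∀ y : ℝ × ℝ, ‖y‖ < m → |φ y| ≤ C * ‖y‖ ^ 5)
    (ρ : ℝ) (ρ0 : 0 < ρ)
    (hρ : ∀ y : ℝ × ℝ, ‖y‖ < ρ → DifferentiableAt ℝ φ y ∧ ‖fderiv ℝ φ y‖ ≤ 1 / 8) :
    ∃ δ > (0 : ℝ), ∃ Rh : ℝ → ℝ,
      (ContinuousOn Rh (Ico 0 δ) ∧ Rh 0 = 0 ∧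
        ∀ r ∈ Ico (0 : ℝ) δ, Rh r = 2 * Ψ (r, Rh r)) ∧
      (∀ Rh' : ℝ → ℝ, ContinuousOn Rh' (Ico 0 δ) → Rh' 0 = 0 →
        (∀ r ∈ Ico (0 : ℝ) δ, Rh' r = 2 * Ψ (r, Rh' r)) →
        EqOn Rh' Rh (Ico 0 δ)) ∧
      Filter.Tendsto (fun r : ℝ => Rh r / r ^ 3) (nhdsWithin 0 (Ioi 0)) (nhds h) := by
  classical
  obtain ⟨ε, hε0, hε1, hεm, hερ, hεA⟩ :
      ∃ ε : ℝ, 0 < ε ∧ ε ≤ 1 ∧ ε ≤ m / 2 ∧ ε ≤ ρ / 2 ∧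
        (3 * h * |c| + 2 * C + 1) * ε ^ 2 ≤ 1 / 8 := by
    have hA0 : (0:ℝ) < 3 * h * |c| + 2 * C + 1 := by positivity
    refine ⟨min (min 1 (m / 2)) (min (ρ / 2) (1 / (8 * (3 * h * |c| + 2 * C + 1)))),
      ?_, ?_, ?_, ?_, ?_⟩
    · simp only [lt_min_iff]
      exact ⟨⟨one_pos, by linarith⟩, by linarith, by positivity⟩
    · exact (min_le_left _ _).trans (min_le_left _ _)
    · exact (min_le_left _ _).trans (min_le_right _ _)
    · exact (min_le_right _ _).trans (min_le_left _ _)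
    · set A : ℝ := 3 * h * |c| + 2 * C + 1 with hAdef
      set e : ℝ := min (min 1 (m / 2)) (min (ρ / 2) (1 / (8 * A))) with hedef
      have he1 : e ≤ 1 := (min_le_left _ _).trans (min_le_left _ _)
      have heA : e ≤ 1 / (8 * A) := (min_le_right _ _).trans (min_le_right _ _)
      have he0 : 0 < e := by
        simp only [hedef, lt_min_iff]
        exact ⟨⟨one_pos, by linarith⟩, by linarith, by positivity⟩
      have h1 : A * e ≤ 1 / 8 := by
        calc A * e ≤ A * (1 / (8 * A)) := mul_le_mul_of_nonneg_left heA hA0.le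
          _ = 1 / 8 := by field_simp
      nlinarith
  obtain ⟨δ, hδ0, hδε, hδcube⟩ : ∃ δ : ℝ, 0 < δ ∧ δ ≤ ε ∧ h * δ ^ 3 ≤ ε / 8 := by
    have hδex : ∀ x : ℝ, 0 < x → x ≤ ε → x ≤ 1 / (8 * h * ε + 1) → h * x ^ 3 ≤ ε / 8 := by
      intro x hx0 hxε hx1
      have hsq : x ^ 2 ≤ ε ^ 2 := by nlinarith
      have h1 : x ^ 3 ≤ ε ^ 2 * x := by nlinarith [mul_le_mul_of_nonneg_right hsq hx0.le]
      have h2 : h * (ε ^ 2 * x) ≤ h * ε ^ 2 * (1 / (8 * h * ε + 1)) := by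
        rw [← mul_assoc]
        exact mul_le_mul_of_nonneg_left hx1 (by positivity)
      have h3 : h * ε ^ 2 * (1 / (8 * h * ε + 1)) ≤ ε / 8 := by
        rw [mul_one_div, div_le_div_iff₀ (by positivity) (by norm_num : (0:ℝ) < 8)]
        nlinarith
      nlinarith
    exact ⟨min ε (1 / (8 * h * ε + 1)), lt_min hε0 (by positivity), min_le_left _ _,
      hδex _ (lt_min hε0 (by positivity)) (min_le_left _ _) (min_le_right _ _)⟩
  -- clamp
  set u : ℝ → ℝ := fun R => max (-ε) (min ε R) with hudef
  have hu_mem : ∀ R, |u R| ≤ ε := fun R => clamp_abs_le ε R hε0.le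
  have hu_lip : ∀ R₁ R₂, |u R₁ - u R₂| ≤ |R₁ - R₂| := fun R₁ R₂ => clamp_lip ε R₁ R₂
  have hu_eq : ∀ R, |R| ≤ ε → u R = R := fun R hR => clamp_eq ε R hR
  have hnorm_pt : ∀ r R : ℝ, 0 ≤ r → r ≤ δ → |R| ≤ ε → ‖((r, R) : ℝ × ℝ)‖ ≤ ε := by
    intro r R hr0 hrδ hR
    rw [Prod.norm_def]
    simp only [Real.norm_eq_abs]
    exact max_le (by rw [abs_of_nonneg hr0]; linarith) hR
  have hεltm : ε < m := by linarith
  have hεltρ : ε < ρ := by linarith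
  have hexp : ∀ r R : ℝ, 2 * Ψ (r, R) = h * (r ^ 3 - c * R ^ 3) + 2 * φ (r, R) := by
    intro r R; rw [hΨ]; ring
  -- self-map bound
  have hmap : ∀ r, 0 ≤ r → r ≤ δ → ∀ R, |2 * Ψ (r, u R)| ≤ ε / 2 := by
    intro r hr0 hrδ R
    rw [hexp]
    have hn : ‖((r, u R) : ℝ × ℝ)‖ ≤ ε := hnorm_pt r (u R) hr0 hrδ (hu_mem R)
    have hφb : |φ (r, u R)| ≤ C * ε ^ 5 := by
      refine (hφC _ (lt_of_le_of_lt hn hεltm)).trans ?_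
      exact mul_le_mul_of_nonneg_left (pow_le_pow_left₀ (norm_nonneg _) hn 5) C0
    exact map_est h c C ε δ r (u R) (φ (r, u R)) hh C0 hε0 hε1 hεA hδcube hr0 hrδ
      (hu_mem R) hφb
  -- Lipschitz bound
  have hlip : ∀ r, 0 ≤ r → r ≤ δ → ∀ R₁ R₂,
      |2 * Ψ (r, u R₁) - 2 * Ψ (r, u R₂)| ≤ 1 / 2 * |R₁ - R₂| := by
    intro r hr0 hrδ R₁ R₂
    rw [hexp, hexp]
    have key : h * (r ^ 3 - c * (u R₁) ^ 3) + 2 * φ (r, u R₁)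
        - (h * (r ^ 3 - c * (u R₂) ^ 3) + 2 * φ (r, u R₂))
        = (-(h * c)) * ((u R₁) ^ 3 - (u R₂) ^ 3) + 2 * (φ (r, u R₁) - φ (r, u R₂)) := by
      ring
    rw [key]
    have hφd : |φ (r, u R₁) - φ (r, u R₂)| ≤ 1 / 8 * |R₁ - R₂| := by
      have hmem : ∀ R : ℝ, |R| ≤ ε →
          ((r, R) : ℝ × ℝ) ∈ Metric.closedBall (0 : ℝ × ℝ) (ρ / 2) := by
        intro R hR
        rw [Metric.mem_closedBall, dist_zero_right]
        exact (hnorm_pt r R hr0 hrδ hR).trans hερ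
      have hball : ∀ x : ℝ × ℝ, x ∈ Metric.closedBall (0 : ℝ × ℝ) (ρ / 2) → ‖x‖ < ρ := by
        intro x hx
        rw [Metric.mem_closedBall, dist_zero_right] at hx
        linarith
      have hmvt := Convex.norm_image_sub_le_of_norm_fderiv_le
        (f := φ) (s := Metric.closedBall (0 : ℝ × ℝ) (ρ / 2)) (C := 1 / 8)
        (fun x hx => (hρ x (hball x hx)).1)
        (fun x hx => (hρ x (hball x hx)).2)
        (convex_closedBall _ _) (hmem (u R₂) (hu_mem R₂)) (hmem (u R₁) (hu_mem R₁))
      have hnd : ‖((r, u R₁) : ℝ × ℝ) - ((r, u R₂) : ℝ × ℝ)‖ = |u R₁ - u R₂| := by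
        rw [Prod.mk_sub_mk, Prod.norm_def]
        simp [Real.norm_eq_abs, abs_nonneg]
      rw [Real.norm_eq_abs] at hmvt
      rw [hnd] at hmvt
      refine hmvt.trans ?_
      exact mul_le_mul_of_nonneg_left (hu_lip R₁ R₂) (by norm_num)
    exact lip_est h c C ε (|R₁ - R₂|) (u R₁) (u R₂) (φ (r, u R₁)) (φ (r, u R₂))
      hh C0 hε0 hεA (hu_mem R₁) (hu_mem R₂) (hu_lip R₁ R₂) hφd (abs_nonneg _)
  -- contraction
  have hcontr : ∀ r : ℝ, 0 ≤ r ∧ r ≤ δ →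
      ContractingWith (1/2 : NNReal) (fun R => 2 * Ψ (r, u R)) := by
    intro r hr
    constructor
    · rw [← NNReal.coe_lt_coe]
      norm_num
    · apply LipschitzWith.of_dist_le_mul
      intro x y
      rw [Real.dist_eq, Real.dist_eq]
      have h1 := hlip r hr.1 hr.2 x y
      have h2 : ((1/2 : NNReal) : ℝ) = 1/2 := by norm_num
      rw [h2]
      exact h1
  set Rh : ℝ → ℝ := fun r =>
    if hr : 0 ≤ r ∧ r ≤ δ then
      ContractingWith.fixedPoint (fun R => 2 * Ψ (r, u R)) (hcontr r hr)
    else 0 with hRhdef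
  have hfix : ∀ r : ℝ, 0 ≤ r → r ≤ δ → 2 * Ψ (r, u (Rh r)) = Rh r := by
    intro r h0 h1
    have hrw : Rh r =
        ContractingWith.fixedPoint (fun R => 2 * Ψ (r, u R)) (hcontr r ⟨h0, h1⟩) :=
      dif_pos ⟨h0, h1⟩
    rw [hrw]
    exact (hcontr r ⟨h0, h1⟩).fixedPoint_isFixedPt
  have hRb : ∀ r : ℝ, 0 ≤ r → r ≤ δ → |Rh r| ≤ ε / 2 := by
    intro r h0 h1
    have := hmap r h0 h1 (Rh r)
    rwa [hfix r h0 h1] at this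
  have heq : ∀ r : ℝ, 0 ≤ r → r ≤ δ → Rh r = 2 * Ψ (r, Rh r) := by
    intro r h0 h1
    conv_lhs => rw [← hfix r h0 h1]
    rw [hu_eq (Rh r) ((hRb r h0 h1).trans (by linarith))]
  have huniq : ∀ r : ℝ, 0 ≤ r → r ≤ δ → ∀ R : ℝ, |R| ≤ ε → R = 2 * Ψ (r, R) → R = Rh r := by
    intro r h0 h1 R hRε hReq
    have hfp : (fun R' => 2 * Ψ (r, u R')) R = R := by
      show 2 * Ψ (r, u R) = R
      rw [hu_eq R hRε]
      exact hReq.symm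
    have h2 := (hcontr r ⟨h0, h1⟩).fixedPoint_unique hfp
    have hrw : Rh r =
        ContractingWith.fixedPoint (fun R => 2 * Ψ (r, u R)) (hcontr r ⟨h0, h1⟩) :=
      dif_pos ⟨h0, h1⟩
    rw [hrw]
    exact h2
  have hRh0 : Rh 0 = 0 := by
    symm
    refine huniq 0 le_rfl hδ0.le 0 (by simpa using hε0.le) ?_
    rw [hexp, hφ0]
    norm_num
  -- continuity
  have hcont : ContinuousOn Rh (Ico 0 δ) := by
    intro r₀ hr₀
    have h0 : 0 ≤ r₀ := hr₀.1
    have h1 : r₀ < δ := hr₀.2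
    have key : ∀ r, 0 ≤ r → r ≤ δ →
        dist (Rh r) (Rh r₀) ≤ 2 * dist (2 * Ψ (r, Rh r₀)) (2 * Ψ (r₀, Rh r₀)) := by
      intro r a b
      have e0 : dist (Rh r) (Rh r₀)
          = dist (2 * Ψ (r, u (Rh r))) (2 * Ψ (r₀, u (Rh r₀))) := by
        rw [hfix r a b, hfix r₀ h0 h1.le]
      have e1 : dist (2 * Ψ (r, u (Rh r))) (2 * Ψ (r₀, u (Rh r₀)))
          ≤ dist (2 * Ψ (r, u (Rh r))) (2 * Ψ (r, u (Rh r₀)))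
            + dist (2 * Ψ (r, u (Rh r₀))) (2 * Ψ (r₀, u (Rh r₀))) := dist_triangle _ _ _
      have e2 : dist (2 * Ψ (r, u (Rh r))) (2 * Ψ (r, u (Rh r₀)))
          ≤ 1 / 2 * dist (Rh r) (Rh r₀) := by
        rw [Real.dist_eq, Real.dist_eq]
        exact hlip r a b _ _
      have e3 : dist (2 * Ψ (r, u (Rh r₀))) (2 * Ψ (r₀, u (Rh r₀)))
          = dist (2 * Ψ (r, Rh r₀)) (2 * Ψ (r₀, Rh r₀)) := by
        rw [hu_eq (Rh r₀) ((hRb r₀ h0 h1.le).trans (by linarith))]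
      linarith [e0.le, e0.ge, e1, e2, e3.le, e3.ge]
    have hmem : ‖((r₀, Rh r₀) : ℝ × ℝ)‖ < ρ :=
      lt_of_le_of_lt
        (hnorm_pt r₀ (Rh r₀) h0 h1.le ((hRb r₀ h0 h1.le).trans (by linarith))) hεltρ
    have hφc : ContinuousAt (fun r : ℝ => φ (r, Rh r₀)) r₀ := by
      have hd : DifferentiableAt ℝ φ (r₀, Rh r₀) := (hρ _ hmem).1
      have hpair : ContinuousAt (fun r : ℝ => ((r, Rh r₀) : ℝ × ℝ)) r₀ :=
        (continuous_id.prodMk continuous_const).continuousAt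
      have hcc : ContinuousAt (φ ∘ fun r : ℝ => ((r, Rh r₀) : ℝ × ℝ)) r₀ :=
        ContinuousAt.comp (x := r₀) (f := fun r : ℝ => ((r, Rh r₀) : ℝ × ℝ))
          (g := φ) hd.continuousAt hpair
      exact hcc
    have hcΨ : ContinuousAt (fun r : ℝ => 2 * Ψ (r, Rh r₀)) r₀ := by
      have hfe : (fun r : ℝ => 2 * Ψ (r, Rh r₀))
          = fun r : ℝ => 2 * (h / 2 * (r ^ 3 - c * (Rh r₀) ^ 3) + φ (r, Rh r₀)) := by
        funext r; rw [hΨ]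
      rw [hfe]
      exact continuousAt_const.mul
        ((continuousAt_const.mul (((continuous_pow 3).continuousAt).sub
          continuousAt_const)).add hφc)
    have htend : Filter.Tendsto (fun r => dist (Rh r) (Rh r₀))
        (nhdsWithin r₀ (Ico 0 δ)) (nhds 0) := by
      refine squeeze_zero'
        (g := fun r : ℝ => 2 * dist (2 * Ψ (r, Rh r₀)) (2 * Ψ (r₀, Rh r₀)))
        (Filter.Eventually.of_forall fun _ => dist_nonneg) ?_ ?_
      · filter_upwards [self_mem_nhdsWithin] with r hr
        exact key r hr.1 hr.2.le
      · have h3 : Filter.Tendsto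
            (fun r : ℝ => 2 * dist (2 * Ψ (r, Rh r₀)) (2 * Ψ (r₀, Rh r₀))) (nhds r₀)
            (nhds (2 * dist (2 * Ψ (r₀, Rh r₀)) (2 * Ψ (r₀, Rh r₀)))) :=
          (Filter.Tendsto.dist hcΨ tendsto_const_nhds).const_mul 2
        rw [dist_self, mul_zero] at h3
        exact h3.mono_left nhdsWithin_le_nhds
    exact tendsto_iff_dist_tendsto_zero.2 htend
  -- the limit
  have hlim : Filter.Tendsto (fun r : ℝ => Rh r / r ^ 3) (nhdsWithin 0 (Ioi 0)) (nhds h) := by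
    set D : ℝ := h * |c| * (2 * (h + 2 * C)) ^ 3 + 2 * C + 2 * C * (2 * (h + 2 * C)) ^ 5
      with hDdef
    have hD0 : 0 ≤ D := by positivity
    have hbound : ∀ r : ℝ, 0 < r → r < δ → |Rh r / r ^ 3 - h| ≤ D * r ^ 2 := by
      intro r hr0 hrδ
      have h0r : (0 : ℝ) ≤ r := hr0.le
      have hr1 : r ≤ 1 := le_trans (le_trans hrδ.le hδε) hε1
      have hRhb : |Rh r| ≤ ε / 2 := hRb r h0r hrδ.le
      have hRhbε : |Rh r| ≤ ε := hRhb.trans (by linarith)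
      have heqr : Rh r = h * (r ^ 3 - c * (Rh r) ^ 3) + 2 * φ (r, Rh r) := by
        conv_lhs => rw [heq r h0r hrδ.le]
        rw [hexp]
      have hnorm5 : ‖((r, Rh r) : ℝ × ℝ)‖ ^ 5 ≤ r ^ 5 + |Rh r| ^ 5 := by
        rw [Prod.norm_def]
        simp only [Real.norm_eq_abs, abs_of_nonneg h0r]
        rcases max_cases r |Rh r| with ⟨hmx, _⟩ | ⟨hmx, _⟩ <;> rw [hmx]
        · nlinarith [pow_nonneg (abs_nonneg (Rh r)) 5]
        · nlinarith [pow_nonneg h0r 5]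
      have hφb : |φ (r, Rh r)| ≤ C * (r ^ 5 + |Rh r| ^ 5) := by
        have hn : ‖((r, Rh r) : ℝ × ℝ)‖ < m :=
          lt_of_le_of_lt (hnorm_pt r (Rh r) h0r hrδ.le hRhbε) hεltm
        exact (hφC _ hn).trans (mul_le_mul_of_nonneg_left hnorm5 C0)
      exact key_est h c C ε r (Rh r) (φ (r, Rh r)) hh C0 hε0 hε1 hεA hr0 hr1
        hRhbε hφb heqr
    have hev : ∀ᶠ r in nhdsWithin (0:ℝ) (Ioi 0), |Rh r / r ^ 3 - h| ≤ D * r ^ 2 := by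
      filter_upwards [Ioo_mem_nhdsGT_of_mem (left_mem_Ico.2 hδ0)] with r hr
      exact hbound r hr.1 hr.2
    have hg : Filter.Tendsto (fun r : ℝ => D * r ^ 2) (nhdsWithin (0:ℝ) (Ioi 0)) (nhds 0) := by
      have h4 : Filter.Tendsto (fun r : ℝ => D * r ^ 2) (nhds 0) (nhds (D * 0 ^ 2)) :=
        (continuous_const.mul (continuous_pow 2)).tendsto 0
      have h5 : D * (0:ℝ) ^ 2 = 0 := by ring
      rw [h5] at h4
      exact h4.mono_left nhdsWithin_le_nhds
    rw [tendsto_iff_dist_tendsto_zero]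
    refine squeeze_zero' (Filter.Eventually.of_forall fun _ => dist_nonneg) ?_ hg
    filter_upwards [hev] with r hr
    rwa [Real.dist_eq]
  -- assembly
  refine ⟨δ, hδ0, Rh, ⟨hcont, hRh0, fun r hr => heq r hr.1 hr.2.le⟩, ?_, hlim⟩
  intro Rh' hco h0' heq' r hr
  have hsub : Icc 0 r ⊆ Ico 0 δ := fun s hs => ⟨hs.1, lt_of_le_of_lt hs.2 hr.2⟩
  have hBcl : IsClosed {s | s ∈ Icc (0:ℝ) r ∧ Rh' s = Rh s} := by
    have hset : {s | s ∈ Icc (0:ℝ) r ∧ Rh' s = Rh s}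
        = Icc (0:ℝ) r ∩ (fun s => Rh' s - Rh s) ⁻¹' {0} := by
      ext s
      simp [sub_eq_zero]
    rw [hset]
    exact ContinuousOn.preimage_isClosed_of_isClosed
      ((hco.mono hsub).sub (hcont.mono hsub)) isClosed_Icc isClosed_singleton
  have hBne : {s | s ∈ Icc (0:ℝ) r ∧ Rh' s = Rh s}.Nonempty :=
    ⟨0, ⟨le_rfl, hr.1⟩, by rw [h0', hRh0]⟩
  have hBbdd : BddAbove {s | s ∈ Icc (0:ℝ) r ∧ Rh' s = Rh s} :=
    ⟨r, fun s hs => hs.1.2⟩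
  have htB : sSup {s | s ∈ Icc (0:ℝ) r ∧ Rh' s = Rh s}
      ∈ {s | s ∈ Icc (0:ℝ) r ∧ Rh' s = Rh s} := hBcl.csSup_mem hBne hBbdd
  set t := sSup {s | s ∈ Icc (0:ℝ) r ∧ Rh' s = Rh s} with htdef
  rcases eq_or_lt_of_le htB.1.2 with hteq | htlt
  · have h6 := htB.2
    rw [hteq] at h6
    exact h6
  · exfalso
    have htIco : t ∈ Ico 0 δ := hsub ⟨htB.1.1, htB.1.2⟩
    have hcwa := hco t htIco
    rw [Metric.continuousWithinAt_iff] at hcwa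
    obtain ⟨η, hη0, hη⟩ := hcwa (ε / 4) (by positivity)
    have hts : t < min (t + η / 2) r := lt_min (by linarith) htlt
    have hsr : min (t + η / 2) r ≤ r := min_le_right _ _
    have hsIcc : min (t + η / 2) r ∈ Icc 0 r := ⟨le_trans htB.1.1 hts.le, hsr⟩
    have hsIco : min (t + η / 2) r ∈ Ico 0 δ := hsub hsIcc
    have hdist : dist (min (t + η / 2) r) t < η := by
      rw [Real.dist_eq, abs_of_pos (by linarith [hts] : (0:ℝ) < min (t + η / 2) r - t)]
      have h7 : min (t + η / 2) r ≤ t + η / 2 := min_le_left _ _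
      linarith
    have h6 := hη hsIco hdist
    rw [Real.dist_eq] at h6
    have hRt : |Rh' t| ≤ ε / 2 := by
      rw [htB.2]
      exact hRb t htIco.1 htIco.2.le
    have hRs : |Rh' (min (t + η / 2) r)| ≤ ε := by
      calc |Rh' (min (t + η / 2) r)|
          = |(Rh' (min (t + η / 2) r) - Rh' t) + Rh' t| := by rw [sub_add_cancel]
        _ ≤ |Rh' (min (t + η / 2) r) - Rh' t| + |Rh' t| := abs_add_le _ _
        _ ≤ ε := by linarith
    have h7 := huniq (min (t + η / 2) r) hsIco.1 hsIco.2.le (Rh' (min (t + η / 2) r)) hRs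
      (heq' (min (t + η / 2) r) hsIco)
    have hsB : min (t + η / 2) r ∈ {s | s ∈ Icc (0:ℝ) r ∧ Rh' s = Rh s} := ⟨hsIcc, h7⟩
    exact absurd (le_csSup hBbdd hsB) (not_le.2 hts)

set_option maxHeartbeats 1000000 in
/-- If `h > 0`, `Ψ(r,R) = (h/2)(r³ − c·R³) + φ(r,R)` with `φ` analytic
near `(0,0)` and all partial derivatives of `φ` at `(0,0)` of total order `≤ 4`
vanishing, then there are `δ > 0` and a unique continuous `R_h : [0,δ) → ℝ` with
`R_h(0) = 0` and `R_h(r) = 2Ψ(r, R_h(r))` on `[0,δ)`, and `lim_{r→0⁺} R_h(r)/r³ = h`. -/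
theorem stmt3 (h c : ℝ) (hh : 0 < h)
    (Ψ φ : ℝ × ℝ → ℝ)
    (hφ : AnalyticAt ℝ φ (0, 0))
    (hφ4 : ∀ k : ℕ, k ≤ 4 → iteratedFDeriv ℝ k φ (0, 0) = 0)
    (hΨ : ∀ r R : ℝ, Ψ (r, R) = h / 2 * (r ^ 3 - c * R ^ 3) + φ (r, R)) :
    ∃ δ > (0 : ℝ), ∃ Rh : ℝ → ℝ,
      (ContinuousOn Rh (Ico 0 δ) ∧ Rh 0 = 0 ∧
        ∀ r ∈ Ico (0 : ℝ) δ, Rh r = 2 * Ψ (r, Rh r)) ∧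
      (∀ Rh' : ℝ → ℝ, ContinuousOn Rh' (Ico 0 δ) → Rh' 0 = 0 →
        (∀ r ∈ Ico (0 : ℝ) δ, Rh' r = 2 * Ψ (r, Rh' r)) →
        EqOn Rh' Rh (Ico 0 δ)) ∧
      Filter.Tendsto (fun r : ℝ => Rh r / r ^ 3) (nhdsWithin 0 (Ioi 0)) (nhds h) := by
  classical
  have hφ0 : φ (0, 0) = 0 := by
    have h0 := hφ4 0 (by norm_num)
    have h1 := iteratedFDeriv_zero_apply (𝕜 := ℝ) (f := φ) (x := ((0 : ℝ), (0 : ℝ)))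
      (fun _ => 0)
    rw [h0] at h1
    simpa using h1.symm
  have hfd0 : fderiv ℝ φ (0, 0) = 0 := by
    refine ContinuousLinearMap.ext fun y => ?_
    have h1 := hφ4 1 (by norm_num)
    have h2 := iteratedFDeriv_one_apply (𝕜 := ℝ) (f := φ) (x := ((0 : ℝ), (0 : ℝ))) ![y]
    rw [h1] at h2
    simpa using h2.symm
  obtain ⟨C, C0, m, m0, hφC⟩ :
      ∃ C : ℝ, 0 ≤ C ∧ ∃ m > (0 : ℝ), ∀ y : ℝ × ℝ, ‖y‖ < m → |φ y| ≤ C * ‖y‖ ^ 5 := by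
    obtain ⟨p, hp⟩ := hφ
    obtain ⟨rad, hpb⟩ := hp
    have hcoef : ∀ k : ℕ, k ≤ 4 → ∀ y : ℝ × ℝ, p k (fun _ => y) = 0 := by
      intro k hk y
      have h2 := hpb.factorial_smul y k
      rw [hφ4 k hk] at h2
      simp only [ContinuousMultilinearMap.zero_apply] at h2
      have h3 : (k.factorial : ℝ) * p k (fun _ => y) = 0 := by
        rw [← nsmul_eq_mul]; exact h2
      rcases mul_eq_zero.1 h3 with h4 | h4
      · exact absurd h4 (by exact_mod_cast k.factorial_ne_zero)
      · exact h4
    have hps : ∀ y : ℝ × ℝ, p.partialSum 5 y = 0 := by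
      intro y
      refine Finset.sum_eq_zero fun k hk => ?_
      exact hcoef k (by simp only [Finset.mem_range] at hk; omega) y
    have hbig : (fun y : ℝ × ℝ => φ y) =O[nhds 0] fun y => ‖y‖ ^ 5 := by
      have h5 := (hpb.hasFPowerSeriesAt).isBigO_sub_partialSum_pow 5
      simpa [hps, Prod.mk_zero_zero] using h5
    obtain ⟨c0, hc0⟩ := hbig.bound
    rw [Metric.eventually_nhds_iff] at hc0
    obtain ⟨m, m0, hm⟩ := hc0
    refine ⟨max c0 0, le_max_right _ _, m, m0, fun y hy => ?_⟩
    have h6 := hm (y := y) (by simpa [dist_zero_right] using hy)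
    have h7 : ‖(‖y‖ ^ 5 : ℝ)‖ = ‖y‖ ^ 5 := by
      rw [Real.norm_eq_abs, abs_of_nonneg (by positivity)]
    rw [Real.norm_eq_abs, h7] at h6
    calc |φ y| ≤ c0 * ‖y‖ ^ 5 := h6
      _ ≤ max c0 0 * ‖y‖ ^ 5 := by
          have h8 : (0:ℝ) ≤ ‖y‖ ^ 5 := by positivity
          exact mul_le_mul_of_nonneg_right (le_max_left _ _) h8
  obtain ⟨ρ, ρ0, hρ⟩ : ∃ ρ > (0 : ℝ), ∀ y : ℝ × ℝ, ‖y‖ < ρ →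
      DifferentiableAt ℝ φ y ∧ ‖fderiv ℝ φ y‖ ≤ 1 / 8 := by
    have h1 : ∀ᶠ y : ℝ × ℝ in nhds (0, 0), AnalyticAt ℝ φ y := hφ.eventually_analyticAt
    have h2 : ∀ᶠ y : ℝ × ℝ in nhds (0, 0), ‖fderiv ℝ φ y‖ < 1 / 8 := by
      have hc : ContinuousAt (fderiv ℝ φ) (0, 0) := (hφ.fderiv).continuousAt
      have h3 := hc (Metric.ball_mem_nhds (fderiv ℝ φ (0, 0)) (by norm_num : (0:ℝ) < 1/8))
      filter_upwards [h3] with y hy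
      simp only [Set.mem_preimage, Metric.mem_ball, hfd0, dist_zero_right] at hy
      exact hy
    have h12 := h1.and h2
    rw [Metric.eventually_nhds_iff] at h12
    obtain ⟨ρ, ρ0, hρ'⟩ := h12
    refine ⟨ρ, ρ0, fun y hy => ?_⟩
    have h4 := hρ' (y := y)
      (by rw [Prod.mk_zero_zero, dist_zero_right]; exact hy)
    exact ⟨h4.1.differentiableAt, h4.2.le⟩
  exact stmt3_core h c hh Ψ φ hΨ hφ0 C C0 m m0 hφC ρ ρ0 hρ
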